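/- Let p > 1, let ψ : [0, θ₀] → ℝ be C¹ with ψ' = −1 − cos²ψ · F_p(ψ), and define ρ(θ) = ρ(0) · exp( −∫₀^θ cos(ψ(τ)) sin(ψ(τ)) F_p(ψ(τ)) dτ ) with ρ(0) > 0. If ψ(0) = π and ψ(θ̄) = −(2j−1)π for some θ̄ ∈ (0, θ₀] and integer j ≥ 1, then ρ(θ̄) = ρ(0). -/

import Mathlib

open Real

noncomputable def Fp (p ψ : ℝ) : ℝ :=
  ((8 * p - 4) * cos ψ ^ 2 + (5 * p - 7) * sin ψ ^ 2) /
    (4 * cos ψ ^ 2 + (p - 1) * sin ψ ^ 2)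

/-- The integrand after the change of variables. -/
noncomputable def gA (p σ : ℝ) : ℝ :=
  cos σ * sin σ * ((8 * p - 4) * cos σ ^ 2 + (5 * p - 7) * sin σ ^ 2) /
    ((4 * cos σ ^ 2 + (p - 1) * sin σ ^ 2) +
      cos σ ^ 2 * ((8 * p - 4) * cos σ ^ 2 + (5 * p - 7) * sin σ ^ 2))

lemma Dn_pos {p : ℝ} (hp : 1 < p) (σ : ℝ) :
    0 < 4 * cos σ ^ 2 + (p - 1) * sin σ ^ 2 := by
  rcases le_total p 5 with h | h
  · nlinarith [sin_sq_add_cos_sq σ, mul_nonneg (sub_nonneg.2 h) (sq_nonneg (cos σ))]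
  · nlinarith [sin_sq_add_cos_sq σ, mul_nonneg (by linarith : (0:ℝ) ≤ p - 5) (sq_nonneg (sin σ))]

lemma Dd_pos {p : ℝ} (hp : 1 < p) (σ : ℝ) :
    0 < (4 * cos σ ^ 2 + (p - 1) * sin σ ^ 2) +
      cos σ ^ 2 * ((8 * p - 4) * cos σ ^ 2 + (5 * p - 7) * sin σ ^ 2) := by
  have hs2 : sin σ ^ 2 = 1 - cos σ ^ 2 := by nlinarith [sin_sq_add_cos_sq σ]
  rw [hs2]
  nlinarith [sq_nonneg (cos σ), mul_nonneg (by linarith : (0:ℝ) ≤ 4 * p - 2) (sq_nonneg (cos σ)),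
    mul_nonneg (by linarith : (0:ℝ) ≤ 3 * p + 3) (mul_nonneg (sq_nonneg (cos σ)) (sq_nonneg (cos σ)))]

lemma Fp_cont {p : ℝ} (hp : 1 < p) : Continuous (Fp p) := by
  apply Continuous.div
  · fun_prop
  · fun_prop
  · exact fun σ => (Dn_pos hp σ).ne'

lemma gA_cont {p : ℝ} (hp : 1 < p) : Continuous (gA p) := by
  apply Continuous.div
  · fun_prop
  · fun_prop
  · exact fun σ => (Dd_pos hp σ).ne'

lemma gA_odd (p σ : ℝ) : gA p (-σ) = -gA p σ := by
  simp only [gA, cos_neg, sin_neg]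
  ring

lemma gA_periodic (p : ℝ) : Function.Periodic (gA p) π := by
  intro σ
  simp only [gA, cos_add_pi, sin_add_pi]
  ring

lemma gA_key {p : ℝ} (hp : 1 < p) (σ : ℝ) :
    cos σ * sin σ * Fp p σ = gA p σ * (1 + cos σ ^ 2 * Fp p σ) := by
  have h1 := (Dn_pos hp σ).ne'
  have h2 := (Dd_pos hp σ).ne'
  rw [Fp, gA]
  generalize (8 * p - 4) * cos σ ^ 2 + (5 * p - 7) * sin σ ^ 2 = N at *
  generalize 4 * cos σ ^ 2 + (p - 1) * sin σ ^ 2 = D at *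
  field_simp
  try ring

lemma gA_int_zero {p : ℝ} (hp : 1 < p) (j : ℕ) :
    (∫ σ in (-(2 * (j : ℝ) - 1) * π)..π, gA p σ) = 0 := by
  have hint : ∀ t₁ t₂ : ℝ, IntervalIntegrable (gA p) MeasureTheory.volume t₁ t₂ :=
    fun t₁ t₂ => (gA_cont hp).intervalIntegrable t₁ t₂
  have hper := gA_periodic p
  -- integral over one period is zero
  have hone : (∫ σ in (0 : ℝ)..π, gA p σ) = 0 := by
    have h1 : (∫ σ in (0 : ℝ)..π, gA p σ) = ∫ σ in (-(π/2))..(π/2), gA p σ := by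
      have h := hper.intervalIntegral_add_eq 0 (-(π/2))
      rw [show -(π/2) + π = π/2 by ring, zero_add] at h
      exact h
    have h2 : (∫ σ in (-(π/2))..(0:ℝ), gA p σ) = -∫ σ in (0:ℝ)..(π/2), gA p σ := by
      have := intervalIntegral.integral_comp_neg (a := (0:ℝ)) (b := π/2) (fun x => gA p x)
      simp only [neg_zero] at this
      rw [← this]
      simp [gA_odd, intervalIntegral.integral_neg]
    rw [h1, ← intervalIntegral.integral_add_adjacent_intervals (hint (-(π/2)) 0) (hint 0 (π/2)),
      h2]
    ring
  have hlen : π = (-(2 * (j : ℝ) - 1) * π) + ((2 * (j : ℤ)) : ℤ) • π := by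
    push_cast [zsmul_eq_mul]
    ring
  nth_rewrite 2 [hlen]
  rw [hper.intervalIntegral_add_zsmul_eq (2 * (j : ℤ)) _ hint,
    hper.intervalIntegral_add_eq (-(2 * (j : ℝ) - 1) * π) 0]
  simp [hone]

theorem stmt_19 (p : ℝ) (hp : 1 < p) (θ₀ : ℝ) (hθ₀ : 0 < θ₀)
    (ψ : ℝ → ℝ)
    (hψ : ∀ θ ∈ Set.Icc 0 θ₀,
      HasDerivAt ψ (-1 - cos (ψ θ) ^ 2 * Fp p (ψ θ)) θ)
    (ρ₀ : ℝ) (hρ₀ : 0 < ρ₀)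
    (hψ0 : ψ 0 = π)
    (θbar : ℝ) (hθbar : θbar ∈ Set.Ioc 0 θ₀)
    (j : ℕ) (hj : 1 ≤ j)
    (hψbar : ψ θbar = -(2 * (j : ℝ) - 1) * π) :
    ρ₀ * Real.exp (-∫ τ in (0 : ℝ)..θbar, cos (ψ τ) * sin (ψ τ) * Fp p (ψ τ)) = ρ₀ := by
  obtain ⟨hθb0, hθbθ₀⟩ := hθbar
  have hgc : Continuous (gA p) := gA_cont hp
  set G : ℝ → ℝ := fun x => ∫ t in (0:ℝ)..x, gA p t with hG_def
  have hGderiv : ∀ x, HasDerivAt G (gA p x) x := by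
    intro x
    exact intervalIntegral.integral_hasDerivAt_right (hgc.intervalIntegrable 0 x)
      hgc.stronglyMeasurable.stronglyMeasurableAtFilter hgc.continuousAt
  have hsub : Set.uIcc (0:ℝ) θbar ⊆ Set.Icc 0 θ₀ := by
    rw [Set.uIcc_of_le hθb0.le]
    exact Set.Icc_subset_Icc le_rfl hθbθ₀
  -- derivative of -G ∘ ψ
  have hcomp : ∀ θ ∈ Set.uIcc (0:ℝ) θbar,
      HasDerivAt (fun t => -G (ψ t)) (cos (ψ θ) * sin (ψ θ) * Fp p (ψ θ)) θ := by
    intro θ hθ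
    have h1 := ((hGderiv (ψ θ)).comp θ (hψ θ (hsub hθ))).neg
    have h2 : -(gA p (ψ θ) * (-1 - cos (ψ θ) ^ 2 * Fp p (ψ θ)))
        = cos (ψ θ) * sin (ψ θ) * Fp p (ψ θ) := by
      rw [gA_key hp (ψ θ)]; ring
    rw [h2] at h1
    exact h1
  -- integrability of the integrand
  have hψcont : ContinuousOn ψ (Set.Icc 0 θ₀) :=
    fun θ hθ => ((hψ θ hθ).continuousAt).continuousWithinAt
  have hFint : IntervalIntegrable (fun τ => cos (ψ τ) * sin (ψ τ) * Fp p (ψ τ))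
      MeasureTheory.volume 0 θbar := by
    apply ContinuousOn.intervalIntegrable
    have hc : Continuous (fun σ => cos σ * sin σ * Fp p σ) :=
      (continuous_cos.mul continuous_sin).mul (Fp_cont hp)
    exact hc.comp_continuousOn (hψcont.mono hsub)
  have hint : (∫ τ in (0:ℝ)..θbar, cos (ψ τ) * sin (ψ τ) * Fp p (ψ τ))
      = -G (ψ θbar) - -G (ψ 0) :=
    intervalIntegral.integral_eq_sub_of_hasDerivAt hcomp hFint
  have hGzero : G (ψ 0) - G (ψ θbar) = 0 := by
    rw [hψ0, hψbar]
    have := gA_int_zero hp (p := p) j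
    rw [← intervalIntegral.integral_interval_sub_left (hgc.intervalIntegrable 0 π)
      (hgc.intervalIntegrable 0 (-(2 * (j : ℝ) - 1) * π))] at this
    simpa [hG_def] using this
  have : (∫ τ in (0:ℝ)..θbar, cos (ψ τ) * sin (ψ τ) * Fp p (ψ τ)) = 0 := by
    rw [hint]; linarith
  rw [this]
  simp
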